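/- For all x > 0, (sinh x)/x > (cosh(x/√5))^{5/3}. -/
import Mathlib

open Real Nat

lemma auxQ (n : ℕ) (h : 9 ≤ n) : (2*n+3)^3 * 5^n ≤ 48 * 9^n := by
  induction n with
  | zero => omega
  | succ k ih =>
    rcases Nat.lt_or_ge k 9 with hk | hk
    · have hk8 : k = 8 := by omega
      subst hk8; norm_num
    · have h1 := ih (by omega)
      obtain ⟨m, rfl⟩ : ∃ m, k = m + 9 := ⟨k - 9, by omega⟩
      have step : (2*(m+9+1)+3)^3 * 5 ≤ 9 * (2*(m+9)+3)^3 := by nlinarith [Nat.zero_le (m^3), Nat.zero_le (m^2), Nat.zero_le m]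
      calc (2*(m+9+1)+3)^3 * 5^(m+9+1) = ((2*(m+9+1)+3)^3*5) * 5^(m+9) := by ring
        _ ≤ (9*(2*(m+9)+3)^3) * 5^(m+9) := Nat.mul_le_mul_right _ step
        _ = 9 * ((2*(m+9)+3)^3 * 5^(m+9)) := by ring
        _ ≤ 9 * (48*9^(m+9)) := Nat.mul_le_mul_left _ h1
        _ = 48 * 9^(m+9+1) := by ring

lemma aux2 (n : ℕ) (h : 3 ≤ n) : 5*9^n + 10 ≤ 25^n := by
  induction n with
  | zero => omega
  | succ k ih =>
    rcases Nat.lt_or_ge k 3 with hk | hk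
    · have hk2 : k = 2 := by omega
      subst hk2; norm_num
    · have h1 := ih (by omega)
      calc 5*9^(k+1) + 10 ≤ 9*(5*9^k + 10) := by rw [pow_succ]; ring_nf; omega
        _ ≤ 9*25^k := Nat.mul_le_mul_left _ h1
        _ ≤ 25^(k+1) := by rw [pow_succ]; omega

lemma keyNat (n : ℕ) : (2*n+1)*(2*n+2)*(2*n+3)*(25^n+5*9^n+10) + 12*5^n ≤ 108*45^n := by
  rcases Nat.lt_or_ge n 9 with h | h
  · interval_cases n <;> norm_num
  · have hQ := auxQ n h
    have h1 : (2*n+1)*(2*n+2)*(2*n+3) ≤ (2*n+3)^3 := by nlinarith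
    have h2 : 25 ^ n + 5*9^n + 10 ≤ 2*25^n := by have := aux2 n (by omega); omega
    have h5 : 5^n ≤ 45^n := Nat.pow_le_pow_left (by norm_num) n
    have h45 : (45:ℕ)^n = 9^n * 5^n := by rw [← Nat.mul_pow]
    have h25 : (25:ℕ)^n = 5^n * 5^n := by rw [← Nat.mul_pow]
    calc (2*n+1)*(2*n+2)*(2*n+3)*(25^n+5*9^n+10) + 12*5^n
        ≤ (2*n+3)^3*(2*25^n) + 12*45^n := by
          have := Nat.mul_le_mul h1 h2; omega
      _ = 2*((2*n+3)^3*5^n)*5^n + 12*45^n := by rw [h25]; ring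
      _ ≤ 2*(48*9^n)*5^n + 12*45^n := by
          have := Nat.mul_le_mul_right (5^n) (Nat.mul_le_mul_left 2 hQ)
          nlinarith
      _ = 108*45^n := by rw [h45]; ring


-- quintuple-angle identity for cosh^5
lemma cosh_pow_five (t : ℝ) :
    Real.cosh t ^ 5 = (Real.cosh (5*t) + 5*Real.cosh (3*t) + 10*Real.cosh t)/16 := by
  have h5 : (5:ℝ)*t = t+t+t+t+t := by ring
  have h3 : (3:ℝ)*t = t+t+t := by ring
  rw [h5, h3]
  simp only [Real.cosh_eq, Real.exp_add, Real.exp_neg]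
  have hE := Real.exp_pos t
  field_simp
  ring

lemma core_ineq (x : ℝ) (hx : 0 < x) :
    Real.sinh x ^ 3 > x^3 * Real.cosh (x / Real.sqrt 5) ^ 5 := by
  have key := keyNat
  set u : ℝ := x / Real.sqrt 5 with hu
  -- u powers
  have hsq : Real.sqrt 5 ^ 2 = 5 := Real.sq_sqrt (by norm_num)
  have hupow : ∀ n : ℕ, u ^ (2*n) = x^(2*n) / 5^n := by
    intro n
    rw [hu, div_pow, pow_mul, pow_mul, hsq]
  -- LHS series
  set f : ℕ → ℝ := fun n => 4*((3*x)^(2*n+1)/((2*n+1)! : ℝ)) - 12*(x^(2*n+1)/((2*n+1)! : ℝ)) with hfdef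
  have hf : HasSum f (4*Real.sinh (3*x) - 12*Real.sinh x) :=
    ((Real.hasSum_sinh (3*x)).mul_left 4).sub ((Real.hasSum_sinh x).mul_left 12)
  have hf0 : f 0 = 0 := by
    simp [hfdef, Nat.factorial]; ring
  have hshift : HasSum (fun n => f (n+1)) (4*Real.sinh (3*x) - 12*Real.sinh x) := by
    have := (hasSum_nat_add_iff' (f := f) 1).mpr hf
    simpa [Finset.sum_range_one, hf0] using this
  -- RHS series
  set g : ℕ → ℝ := fun n => x^3 * ((5*u)^(2*n)/((2*n)! : ℝ) + 5*((3*u)^(2*n)/((2*n)! : ℝ)) + 10*(u^(2*n)/((2*n)! : ℝ))) with hgdef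
  have hg : HasSum g (x^3 * (Real.cosh (5*u) + 5*Real.cosh (3*u) + 10*Real.cosh u)) :=
    (((Real.hasSum_cosh (5*u)).add ((Real.hasSum_cosh (3*u)).mul_left 5)).add
      ((Real.hasSum_cosh u).mul_left 10)).mul_left (x^3)
  have hd : HasSum (fun n => f (n+1) - g n)
      ((4*Real.sinh (3*x) - 12*Real.sinh x) - x^3 * (Real.cosh (5*u) + 5*Real.cosh (3*u) + 10*Real.cosh u)) :=
    hshift.sub hg
  -- termwise nonnegativity
  have hterm : ∀ n : ℕ, 0 ≤ f (n+1) - g n := by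
    intro n
    have hxp : (0:ℝ) ≤ x^(2*n+3) := le_of_lt (pow_pos hx _)
    have hFpos : (0:ℝ) < (2*n)! := by exact_mod_cast (2*n).factorial_pos
    have hfac : ((2*n+3)! : ℝ) = (2*n+3)*((2*n+2)*((2*n+1)*(2*n)!)) := by
      rw [show 2*n+3 = (2*n+2)+1 from rfl, Nat.factorial_succ,
          show 2*n+2 = (2*n+1)+1 from rfl, Nat.factorial_succ,
          show 2*n+1 = (2*n)+1 from rfl, Nat.factorial_succ]
      push_cast
      ring
    have hkey : ((2*n+1)*(2*n+2)*(2*n+3)*((25:ℝ)^n+5*9^n+10) + 12*5^n : ℝ) ≤ 108*(9^n*5^n) := by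
      have h := (Nat.cast_le (α := ℝ)).2 (key n)
      push_cast at h
      rw [show (45:ℝ) = 9*5 by norm_num, mul_pow] at h
      linarith
    have h3p : (3:ℝ)^(2*n+3) = 27*9^n := by
      rw [pow_add, pow_mul]; norm_num [mul_comm]
    have hfval : f (n+1) = (4*3^(2*n+3) - 12) * x^(2*n+3) / ((2*n+3)! : ℝ) := by
      simp only [hfdef]
      rw [mul_pow]
      have : 2*(n+1)+1 = 2*n+3 := by ring
      rw [this]
      ring
    have hgval : g n = ((25:ℝ)^n + 5*9^n + 10) * x^(2*n+3) / (5^n * (2*n)!) := by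
      simp only [hgdef]
      rw [mul_pow, mul_pow, hupow n]
      have h5 : (5:ℝ)^(2*n) = 25^n := by rw [pow_mul]; norm_num
      have h3 : (3:ℝ)^(2*n) = 9^n := by rw [pow_mul]; norm_num
      rw [h5, h3]
      have : x^3 * x^(2*n) = x^(2*n+3) := by rw [← pow_add]; ring_nf
      field_simp
      ring
    rw [hfval, hgval, sub_nonneg, div_le_div_iff₀ (by positivity) (by positivity)]
    rw [hfac, h3p]
    have h5pos : (0:ℝ) < 5^n := by positivity
    nlinarith [mul_le_mul_of_nonneg_right hkey hFpos.le, mul_nonneg (mul_nonneg hxp h5pos.le) hFpos.le,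
      mul_pos (mul_pos (pow_pos hx (2*n+3)) h5pos) hFpos]
  -- strict positivity at n = 3
  have hterm3 : 0 < f 4 - g 3 := by
    have hfval : f 4 = 78720 * x^9 / 362880 := by
      simp only [hfdef]
      norm_num [Nat.factorial, mul_pow]
      ring
    have hgval : g 3 = 19280 * x^9 / 90000 := by
      simp only [hgdef]
      rw [mul_pow, mul_pow, hupow 3]
      norm_num [Nat.factorial]
      have : x^3 * x^6 = x^9 := by ring
      field_simp
      ring
    rw [hfval, hgval]
    have : (0:ℝ) < x^9 := pow_pos hx 9
    nlinarith
  -- sum up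
  have hpos : 0 < (4*Real.sinh (3*x) - 12*Real.sinh x) - x^3 * (Real.cosh (5*u) + 5*Real.cosh (3*u) + 10*Real.cosh u) := by
    have := Summable.tsum_pos hd.summable hterm 3 hterm3
    rwa [hd.tsum_eq] at this
  have hsinh3 : Real.sinh (3*x) = 4*Real.sinh x ^3 + 3*Real.sinh x := Real.sinh_three_mul x
  have hcosh5 := cosh_pow_five u
  rw [hsinh3] at hpos
  rw [gt_iff_lt, hcosh5]
  nlinarith [hpos]

theorem stmt_2 (x : ℝ) (hx : 0 < x) :
    Real.sinh x / x > (Real.cosh (x / Real.sqrt 5)) ^ ((5 : ℝ) / 3) := by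
  have hc : 0 < Real.cosh (x / Real.sqrt 5) := Real.cosh_pos _
  have hcore := core_ineq x hx
  have hxp : (0:ℝ) < x^3 := pow_pos hx 3
  have h1 : (Real.cosh (x/Real.sqrt 5) ^ ((5:ℝ)/3)) ^ (3:ℕ)
      = Real.cosh (x/Real.sqrt 5) ^ (5:ℕ) := by
    rw [← Real.rpow_natCast (Real.cosh (x/Real.sqrt 5) ^ ((5:ℝ)/3)) 3,
      ← Real.rpow_mul hc.le,
      show ((5:ℝ)/3*(3:ℕ)) = ((5:ℕ):ℝ) by norm_num, Real.rpow_natCast]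
  refine lt_of_pow_lt_pow_left₀ 3 (le_of_lt (div_pos (Real.sinh_pos_iff.2 hx) hx)) ?_
  rw [h1, div_pow, lt_div_iff₀ hxp]
  nlinarith [hcore]
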